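/- arXiv:1609.09657 — 5 statements merged into one kernel-verified Lean document; each statement's English description precedes it below -/
import Mathlib

section
/- Let $\nu$ be a Borel measure on $(0,\infty)$ with tail $\nu(x,\infty) = x^{-\alpha}\theta(\log x)$ for all $x>0$, where $0<\alpha<1$, $c>1$, and $\theta:\mathbb{R}\to(0,\infty)$ is $\log c$-periodic. Define the measure $\rho$ on $(0,\infty)$ by $\rho(A)=\int_A y\,\nu(dy)$. Then for all $x>0$, $\frac{c^\alpha-1}{c-c^\alpha} \le \frac{\rho(0,x]}{x^{1-\alpha}\theta(\log x)} \le \frac{c^\alpha-1}{1-c^{\alpha-1}}$. -/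
open MeasureTheory Set

/-- Bounds for `ρ(0,x] = ∫_{(0,x]} y ν(dy)` where `ν` has the semistable tail
`ν(x,∞) = x^{-α} θ(log x)` with `θ` positive and `log c`-periodic. -/
theorem tail_measure_bounds (ν : Measure ℝ) (α c : ℝ) (θ : ℝ → ℝ)
    (hα0 : 0 < α) (hα1 : α < 1) (hc : 1 < c)
    (hθpos : ∀ y, 0 < θ y)
    (hθper : ∀ y, θ (y + Real.log c) = θ y)
    (htail : ∀ x : ℝ, 0 < x →
      ν (Set.Ioi x) = ENNReal.ofReal (x ^ (-α) * θ (Real.log x))) :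
    ∀ x : ℝ, 0 < x →
      ENNReal.ofReal ((c ^ α - 1) / (c - c ^ α) * (x ^ (1 - α) * θ (Real.log x)))
          ≤ ∫⁻ y in Set.Ioc 0 x, ENNReal.ofReal y ∂ν ∧
      ∫⁻ y in Set.Ioc 0 x, ENNReal.ofReal y ∂ν
          ≤ ENNReal.ofReal ((c ^ α - 1) / (1 - c ^ (α - 1)) * (x ^ (1 - α) * θ (Real.log x))) := by
  intro x hx
  have hc0 : (0:ℝ) < c := lt_trans one_pos hc
  set T : ℝ := θ (Real.log x) with hTdef
  have hT : 0 < T := hθpos _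
  set u : ℝ := c ^ α with hudef
  have hu1 : 1 < u := (Real.one_lt_rpow_iff_of_pos hc0).mpr (Or.inl ⟨hc, hα0⟩)
  have huc : u < c := by
    have := Real.rpow_lt_rpow_of_exponent_lt hc hα1
    rwa [Real.rpow_one] at this
  have hu0 : 0 < u := lt_trans one_pos hu1
  set K : ℝ := x ^ (-α) * T with hKdef
  have hK : 0 < K := mul_pos (Real.rpow_pos_of_pos hx _) hT
  -- θ at log (x / c^n)
  have hθsub : ∀ n : ℕ, θ (Real.log x - n * Real.log c) = T := by
    intro n
    induction n with
    | zero => simp [hTdef]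
    | succ m ih =>
      have h : Real.log x - (m+1 : ℕ) * Real.log c + Real.log c
          = Real.log x - m * Real.log c := by push_cast; ring
      rw [← ih, ← h, hθper]
  have hθshift : ∀ n : ℕ, θ (Real.log (x / c ^ n)) = T := by
    intro n
    have h : Real.log (x / c ^ n) = Real.log x - n * Real.log c := by
      rw [Real.log_div hx.ne' (pow_ne_zero _ hc0.ne'), Real.log_pow]
    rw [h, hθsub]
  -- tail values along x / c^n
  have hrpow : ∀ n : ℕ, (x / c ^ n) ^ (-α) = x ^ (-α) * u ^ n := by
    intro n
    rw [Real.div_rpow hx.le (pow_pos hc0 n).le, div_eq_mul_inv]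
    congr 1
    rw [Real.rpow_neg (pow_nonneg hc0.le n), inv_inv, ← Real.rpow_natCast c n,
      ← Real.rpow_mul hc0.le, mul_comm, Real.rpow_mul hc0.le, Real.rpow_natCast]
  have htail' : ∀ n : ℕ, ν (Ioi (x / c ^ n)) = ENNReal.ofReal (K * u ^ n) := by
    intro n
    rw [htail _ (by positivity), hθshift n, hrpow n, hKdef]
    ring_nf
  -- measure of annuli
  have hablt : ∀ n : ℕ, x / c ^ (n+1) < x / c ^ n :=
    fun n => div_lt_div_of_pos_left hx (pow_pos hc0 n)
      (pow_lt_pow_right₀ hc (Nat.lt_succ_self n))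
  have hann : ∀ n : ℕ, ν (Ioc (x / c ^ (n+1)) (x / c ^ n))
      = ENNReal.ofReal (K * u ^ n * (u - 1)) := by
    intro n
    have hsplit : Ioc (x / c ^ (n+1)) (x / c ^ n) ∪ Ioi (x / c ^ n) = Ioi (x / c ^ (n+1)) :=
      Ioc_union_Ioi_eq_Ioi (hablt n).le
    have h1 := htail' (n+1)
    rw [← hsplit, measure_union (Ioc_disjoint_Ioi le_rfl) measurableSet_Ioi, htail' n] at h1
    have h2 : ν (Ioc (x / c ^ (n+1)) (x / c ^ n))
        = ENNReal.ofReal (K * u ^ (n+1)) - ENNReal.ofReal (K * u ^ n) :=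
      ENNReal.eq_sub_of_add_eq ENNReal.ofReal_ne_top h1
    rw [h2, ← ENNReal.ofReal_sub _ (by positivity)]
    congr 1
    ring
  -- decomposition of (0, x]
  have hunion : Ioc (0:ℝ) x = ⋃ n : ℕ, Ioc (x / c ^ (n+1)) (x / c ^ n) := by
    ext y
    simp only [mem_Ioc, mem_iUnion]
    constructor
    · rintro ⟨hy0, hyx⟩
      have hex : ∃ n : ℕ, x / c ^ n < y := by
        obtain ⟨n, hn⟩ := pow_unbounded_of_one_lt (x / y) hc
        exact ⟨n, (div_lt_iff₀ (pow_pos hc0 n)).mpr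
          (by rw [mul_comm, ← div_lt_iff₀ hy0]; exact hn)⟩
      classical
      have hn0 : Nat.find hex ≠ 0 := by
        intro h
        have hs := Nat.find_spec hex
        rw [h] at hs
        simp at hs
        exact absurd hyx (not_le.mpr hs)
      obtain ⟨m, hm⟩ := Nat.exists_eq_succ_of_ne_zero hn0
      refine ⟨m, ?_, ?_⟩
      · have hs := Nat.find_spec hex; rwa [hm] at hs
      · exact le_of_not_gt (Nat.find_min hex (m := m) (by omega))
    · rintro ⟨n, h1, h2⟩
      refine ⟨lt_trans (by positivity) h1, le_trans h2 ?_⟩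
      exact div_le_self hx.le (one_le_pow₀ hc.le)
  have hpd : Pairwise (Function.onFun Disjoint
      (fun n : ℕ => Ioc (x / c ^ (n+1)) (x / c ^ n))) := by
    have key : ∀ m n : ℕ, m < n →
        Disjoint (Ioc (x / c ^ (m+1)) (x / c ^ m)) (Ioc (x / c ^ (n+1)) (x / c ^ n)) := by
      intro m n hmn
      have hle : x / c ^ n ≤ x / c ^ (m+1) :=
        div_le_div_of_nonneg_left hx.le (pow_pos hc0 _) (pow_le_pow_right₀ hc.le (by omega))
      exact ((Set.Iic_disjoint_Ioi hle).symm).mono Ioc_subset_Ioi_self Ioc_subset_Iic_self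
    intro m n hmn
    rcases lt_or_gt_of_ne hmn with h | h
    · exact key m n h
    · exact (key n m h).symm
  have hdecomp : ∫⁻ y in Ioc (0:ℝ) x, ENNReal.ofReal y ∂ν
      = ∑' n : ℕ, ∫⁻ y in Ioc (x / c ^ (n+1)) (x / c ^ n), ENNReal.ofReal y ∂ν := by
    rw [hunion, lintegral_iUnion (fun n => measurableSet_Ioc) hpd]
  -- geometric ratio
  set r : ℝ := u / c with hrdef
  have hr0 : 0 ≤ r := by positivity
  have hr1 : r < 1 := (div_lt_one hc0).mpr huc
  have h1r : 0 < 1 - r := sub_pos.mpr hr1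
  have hcu : 0 < c - u := sub_pos.mpr huc
  have hu1' : (0:ℝ) ≤ u - 1 := by linarith
  have hgeo : ∀ D : ℝ, 0 ≤ D →
      ∑' n : ℕ, ENNReal.ofReal (D * r ^ n) = ENNReal.ofReal (D * (1 - r)⁻¹) := by
    intro D hD
    rw [← ENNReal.ofReal_tsum_of_nonneg (fun n => mul_nonneg hD (pow_nonneg hr0 n))
      ((summable_geometric_of_lt_one hr0 hr1).mul_left D)]
    congr 1
    rw [tsum_mul_left, tsum_geometric_of_lt_one hr0 hr1]
  -- per-annulus bounds
  have hup : ∀ n : ℕ, ∫⁻ y in Ioc (x / c ^ (n+1)) (x / c ^ n), ENNReal.ofReal y ∂ν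
      ≤ ENNReal.ofReal (x * K * (u - 1) * r ^ n) := by
    intro n
    calc ∫⁻ y in Ioc (x / c ^ (n+1)) (x / c ^ n), ENNReal.ofReal y ∂ν
        ≤ ∫⁻ _ in Ioc (x / c ^ (n+1)) (x / c ^ n), ENNReal.ofReal (x / c ^ n) ∂ν :=
          setLIntegral_mono measurable_const (fun y hy => ENNReal.ofReal_le_ofReal hy.2)
      _ = ENNReal.ofReal (x / c ^ n) * ν (Ioc (x / c ^ (n+1)) (x / c ^ n)) :=
          setLIntegral_const _ _
      _ = ENNReal.ofReal (x / c ^ n * (K * u ^ n * (u - 1))) := by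
          rw [hann n, ← ENNReal.ofReal_mul (by positivity)]
      _ = ENNReal.ofReal (x * K * (u - 1) * r ^ n) := by
          congr 1
          rw [hrdef, div_pow]
          field_simp
  have hlow : ∀ n : ℕ, ENNReal.ofReal (x * K * (u - 1) / c * r ^ n)
      ≤ ∫⁻ y in Ioc (x / c ^ (n+1)) (x / c ^ n), ENNReal.ofReal y ∂ν := by
    intro n
    calc ENNReal.ofReal (x * K * (u - 1) / c * r ^ n)
        = ENNReal.ofReal (x / c ^ (n+1) * (K * u ^ n * (u - 1))) := by
          congr 1
          rw [hrdef, div_pow]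
          field_simp
          ring
      _ = ENNReal.ofReal (x / c ^ (n+1)) * ν (Ioc (x / c ^ (n+1)) (x / c ^ n)) := by
          rw [hann n, ← ENNReal.ofReal_mul (by positivity)]
      _ = ∫⁻ _ in Ioc (x / c ^ (n+1)) (x / c ^ n), ENNReal.ofReal (x / c ^ (n+1)) ∂ν :=
          (setLIntegral_const _ _).symm
      _ ≤ ∫⁻ y in Ioc (x / c ^ (n+1)) (x / c ^ n), ENNReal.ofReal y ∂ν :=
          setLIntegral_mono ENNReal.measurable_ofReal
            (fun y hy => ENNReal.ofReal_le_ofReal hy.1.le)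
  -- power identity
  have hx1 : x ^ ((1:ℝ) - α) = x * x ^ (-α) := by
    have h : (1:ℝ) - α = 1 + (-α) := by ring
    rw [h, Real.rpow_add hx, Real.rpow_one]
  constructor
  · -- lower bound
    have hDl : (0:ℝ) ≤ x * K * (u - 1) / c :=
      div_nonneg (mul_nonneg (mul_nonneg hx.le hK.le) hu1') hc0.le
    have heq : ENNReal.ofReal ((u - 1) / (c - u) * (x ^ ((1:ℝ) - α) * T))
        = ∑' n : ℕ, ENNReal.ofReal (x * K * (u - 1) / c * r ^ n) := by
      rw [hgeo _ hDl]
      congr 1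
      rw [hx1, hKdef, hrdef]
      field_simp
    rw [hdecomp, heq]
    exact ENNReal.tsum_le_tsum hlow
  · -- upper bound
    have hDu : (0:ℝ) ≤ x * K * (u - 1) := mul_nonneg (mul_nonneg hx.le hK.le) hu1'
    have hca : c ^ (α - 1) = r := by rw [hrdef, hudef, Real.rpow_sub hc0, Real.rpow_one]
    rw [hdecomp, hca]
    calc ∑' n : ℕ, ∫⁻ y in Ioc (x / c ^ (n+1)) (x / c ^ n), ENNReal.ofReal y ∂ν
        ≤ ∑' n : ℕ, ENNReal.ofReal (x * K * (u - 1) * r ^ n) := ENNReal.tsum_le_tsum hup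
      _ = ENNReal.ofReal (x * K * (u - 1) * (1 - r)⁻¹) := hgeo _ hDu
      _ = ENNReal.ofReal ((u - 1) / (1 - r) * (x ^ ((1:ℝ) - α) * T)) := by
          congr 1
          rw [hx1, hKdef]
          field_simp
end

section
/- Let $\nu$, $\alpha\in(0,1)$, $c>1$, $\theta$ and $\rho$ be as above (tail $\nu(x,\infty)=x^{-\alpha}\theta(\log x)$ with $\theta$ positive and $\log c$-periodic, $\rho(dy)=y\,\nu(dy)$). Let $\bar\rho(s)=\int_0^\infty e^{-sx}\,\rho(dx)$ be the Laplace transform of $\rho$. Then there exist constants $0<\tilde K_2<\tilde K_1$ such that $\tilde K_2\, s^{1-\alpha}\theta(\log s) \le \bar\rho(1/s) \le \tilde K_1\, s^{1-\alpha}\theta(\log s)$ for all $s>0$. -/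
open MeasureTheory Set

private lemma mul_exp_neg_le_exp_neg_one {u : ℝ} (hu : 1 ≤ u) :
    Real.exp (-u) * u ≤ Real.exp (-1) := by
  have h1 : u ≤ Real.exp (u - 1) := by
    have := Real.add_one_le_exp (u - 1); linarith
  calc Real.exp (-u) * u ≤ Real.exp (-u) * Real.exp (u - 1) :=
        mul_le_mul_of_nonneg_left h1 (Real.exp_pos _).le
    _ = Real.exp (-1) := by rw [← Real.exp_add]; ring_nf

private lemma theta_bds (ν : Measure ℝ) (α c : ℝ) (θ : ℝ → ℝ)
    (hα0 : 0 < α) (hc : 1 < c)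
    (hθpos : ∀ y, 0 < θ y)
    (hθper : ∀ y, θ (y + Real.log c) = θ y)
    (htail : ∀ x : ℝ, 0 < x →
      ν (Set.Ioi x) = ENNReal.ofReal (x ^ (-α) * θ (Real.log x))) :
    ∀ y, Real.exp (-(α * Real.log c)) * θ 0 ≤ θ y ∧
      θ y ≤ Real.exp (α * Real.log c) * θ 0 := by
  set L := Real.log c with hLdef
  have hL : 0 < L := Real.log_pos hc
  have mono : ∀ v w : ℝ, v ≤ w →
      Real.exp (w * -α) * θ w ≤ Real.exp (v * -α) * θ v := by
    intro v w hvw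
    have hsub : Set.Ioi (Real.exp w) ⊆ Set.Ioi (Real.exp v) :=
      Ioi_subset_Ioi (Real.exp_le_exp.2 hvw)
    have hm := measure_mono (μ := ν) hsub
    rw [htail _ (Real.exp_pos w), htail _ (Real.exp_pos v)] at hm
    have h2 := (ENNReal.ofReal_le_ofReal_iff
      (le_of_lt (mul_pos (Real.rpow_pos_of_pos (Real.exp_pos v) _)
        (hθpos _)))).1 hm
    rwa [Real.rpow_def_of_pos (Real.exp_pos w), Real.rpow_def_of_pos (Real.exp_pos v),
      Real.log_exp, Real.log_exp] at h2
  have hper : Function.Periodic θ L := hθper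
  have hθL : θ L = θ 0 := by simpa using hθper 0
  intro y
  set n := ⌊y / L⌋ with hn
  set z := y - (n : ℝ) * L with hzdef
  have hz0 : 0 ≤ z := Int.sub_floor_div_mul_nonneg y hL
  have hzL : z < L := Int.sub_floor_div_mul_lt y hL
  have hyz : θ z = θ y := hper.sub_int_mul_eq n
  have h1 : Real.exp (z * -α) * θ z ≤ Real.exp (0 * -α) * θ 0 := mono 0 z hz0
  rw [zero_mul, Real.exp_zero, one_mul] at h1
  have h3 : Real.exp (L * -α) * θ L ≤ Real.exp (z * -α) * θ z := mono z L hzL.le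
  have hup : θ z ≤ Real.exp (α * L) * θ 0 := by
    have hrw : z * -α = -(z * α) := by ring
    rw [hrw, Real.exp_neg] at h1
    have hp : (0:ℝ) < Real.exp (z * α) := Real.exp_pos _
    have : θ z ≤ Real.exp (z * α) * θ 0 := by
      calc θ z = Real.exp (z * α) * ((Real.exp (z * α))⁻¹ * θ z) := by
            rw [← mul_assoc, mul_inv_cancel₀ (Real.exp_pos _).ne', one_mul]
        _ ≤ Real.exp (z * α) * θ 0 := mul_le_mul_of_nonneg_left h1 hp.le
    refine this.trans (mul_le_mul_of_nonneg_right ?_ (hθpos 0).le)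
    exact Real.exp_le_exp.2 (by nlinarith)
  have hlo : Real.exp (-(α * L)) * θ 0 ≤ θ z := by
    have h4 : Real.exp (z * -α) ≤ 1 := Real.exp_le_one_iff.2 (by nlinarith)
    have h5 : Real.exp (z * -α) * θ z ≤ θ z := by
      nlinarith [hθpos z]
    have hrw : L * -α = -(α * L) := by ring
    rw [hrw, hθL] at h3
    linarith
  rw [hyz] at hup hlo
  exact ⟨hlo, hup⟩

set_option maxHeartbeats 2000000 in
/-- R-O variation bounds for the Laplace transform `ρ̄(1/s) = ∫_0^∞ e^{-x/s} x ν(dx)` of the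
size-biased measure `ρ(dx) = x ν(dx)` associated to a semistable Lévy measure `ν`. -/
theorem laplace_transform_RO_bounds (ν : Measure ℝ) (α c : ℝ) (θ : ℝ → ℝ)
    (hα0 : 0 < α) (hα1 : α < 1) (hc : 1 < c)
    (hθpos : ∀ y, 0 < θ y)
    (hθper : ∀ y, θ (y + Real.log c) = θ y)
    (htail : ∀ x : ℝ, 0 < x →
      ν (Set.Ioi x) = ENNReal.ofReal (x ^ (-α) * θ (Real.log x))) :
    ∃ K1 K2 : ℝ, 0 < K2 ∧ K2 < K1 ∧ ∀ s : ℝ, 0 < s →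
      ENNReal.ofReal (K2 * (s ^ (1 - α) * θ (Real.log s)))
          ≤ ∫⁻ x in Set.Ioi (0:ℝ), ENNReal.ofReal (Real.exp (-(x / s)) * x) ∂ν ∧
      ∫⁻ x in Set.Ioi (0:ℝ), ENNReal.ofReal (Real.exp (-(x / s)) * x) ∂ν
          ≤ ENNReal.ofReal (K1 * (s ^ (1 - α) * θ (Real.log s))) := by
  set L := Real.log c with hLdef
  have hL : 0 < L := Real.log_pos hc
  have hc0 : (0:ℝ) < c := lt_trans one_pos hc
  have hbd := theta_bds ν α c θ hα0 hc hθpos hθper htail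
  set A : ℝ := Real.exp (-(α * L)) * θ 0 with hAdef
  set B : ℝ := Real.exp (α * L) * θ 0 with hBdef
  have hA : 0 < A := mul_pos (Real.exp_pos _) (hθpos 0)
  have hB : 0 < B := mul_pos (Real.exp_pos _) (hθpos 0)
  have hAB : A ≤ B := (hbd 0).1.trans (hbd 0).2
  -- tail bounds
  have tail_ub : ∀ x : ℝ, 0 < x → ν (Set.Ioi x) ≤ ENNReal.ofReal (B * x ^ (-α)) := by
    intro x hx
    rw [htail x hx]
    apply ENNReal.ofReal_le_ofReal
    have h := (hbd (Real.log x)).2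
    have hxp : (0:ℝ) < x ^ (-α) := Real.rpow_pos_of_pos hx _
    nlinarith
  have tail_lb : ∀ x : ℝ, 0 < x → ENNReal.ofReal (A * x ^ (-α)) ≤ ν (Set.Ioi x) := by
    intro x hx
    rw [htail x hx]
    apply ENNReal.ofReal_le_ofReal
    have h := (hbd (Real.log x)).1
    have hxp : (0:ℝ) < x ^ (-α) := Real.rpow_pos_of_pos hx _
    nlinarith
  -- constants
  set K : ℝ := 2 * c ^ 2 with hKdef
  have hKpos : (0:ℝ) < K := by positivity
  have hK1 : (1:ℝ) ≤ K := by nlinarith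
  have hlogK : Real.log K = Real.log 2 + 2 * L := by
    rw [hKdef, Real.log_mul (by norm_num) (by positivity), Real.log_pow]
    push_cast; ring
  set g : ℝ := 1 - Real.exp (-(α * Real.log 2)) with hgdef
  have hlog2 : (0:ℝ) < Real.log 2 := Real.log_pos (by norm_num)
  have hg0 : 0 < g := by
    have : Real.exp (-(α * Real.log 2)) < 1 := by
      rw [Real.exp_lt_one_iff]; nlinarith
    simp only [hgdef]; linarith
  have hg1 : g < 1 := by
    have : 0 < Real.exp (-(α * Real.log 2)) := Real.exp_pos _
    simp only [hgdef]; linarith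
  have hgap : A - B * K ^ (-α) = A * g := by
    have hKα : K ^ (-α) = Real.exp ((Real.log 2 + 2 * L) * -α) := by
      rw [Real.rpow_def_of_pos hKpos, hlogK]
    have hmul : Real.exp (α * L) * Real.exp ((Real.log 2 + 2 * L) * -α)
        = Real.exp (-(α * L)) * Real.exp (-(α * Real.log 2)) := by
      rw [← Real.exp_add, ← Real.exp_add]; ring_nf
    rw [hKα, hAdef, hBdef, hgdef]
    linear_combination (-(θ 0)) * hmul
  set c₀ : ℝ := Real.exp (-K) * (A * g) with hc₀def
  have hc₀ : 0 < c₀ := mul_pos (Real.exp_pos _) (mul_pos hA hg0)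
  set C₁ : ℝ := B / (1 - α) + B * Real.exp (-1) with hC₁def
  have h1α : (0:ℝ) < 1 - α := by linarith
  have hC₁ : B < C₁ := by
    have h1 : B ≤ B / (1 - α) := by
      rw [le_div_iff₀ h1α]; nlinarith
    have h2 : 0 < B * Real.exp (-1) := mul_pos hB (Real.exp_pos _)
    simp only [hC₁def]; linarith
  have hC₁0 : 0 < C₁ := hB.trans hC₁
  refine ⟨C₁ / A, c₀ / B, div_pos hc₀ hB, ?_, ?_⟩
  · -- K2 < K1
    rw [div_lt_div_iff₀ hB hA]
    have hc₀A : c₀ < A := by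
      have hexpK : Real.exp (-K) < 1 := by
        rw [Real.exp_lt_one_iff]; linarith
      calc c₀ = Real.exp (-K) * (A * g) := rfl
        _ < 1 * (A * 1) := by
            apply mul_lt_mul' hexpK.le _ (by positivity) one_pos
            nlinarith
        _ = A := by ring
    calc c₀ * A < C₁ * A := by nlinarith
      _ ≤ C₁ * B := by nlinarith
  intro s hs
  have hmeas : Measurable fun x : ℝ => ENNReal.ofReal (Real.exp (-(x / s)) * x) := by
    apply ENNReal.measurable_ofReal.comp
    exact (Real.measurable_exp.comp ((measurable_id.div_const s).neg)).mul measurable_id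
  have hpow : s * s ^ (-α) = s ^ (1 - α) := by
    rw [show (1:ℝ) - α = 1 + -α by ring, Real.rpow_add hs, Real.rpow_one]
  have hspow : (0:ℝ) < s ^ (1 - α) := Real.rpow_pos_of_pos hs _
  have hsneg : (0:ℝ) < s ^ (-α) := Real.rpow_pos_of_pos hs _
  constructor
  · -- LOWER BOUND
    have hKs : s ≤ K * s := le_mul_of_one_le_left hs.le hK1
    have step1 : ∫⁻ x in Set.Ioc s (K * s), ENNReal.ofReal (Real.exp (-(x / s)) * x) ∂ν
        ≤ ∫⁻ x in Set.Ioi (0:ℝ), ENNReal.ofReal (Real.exp (-(x / s)) * x) ∂ν :=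
      lintegral_mono_set (fun x hx => lt_trans hs hx.1)
    have step2 : ENNReal.ofReal (Real.exp (-K) * s) * ν (Set.Ioc s (K * s))
        ≤ ∫⁻ x in Set.Ioc s (K * s), ENNReal.ofReal (Real.exp (-(x / s)) * x) ∂ν := by
      rw [← setLIntegral_const]
      apply setLIntegral_mono hmeas
      intro x hx
      apply ENNReal.ofReal_le_ofReal
      have hx1 : s < x := hx.1
      have hxK : x / s ≤ K := (div_le_iff₀ hs).2 (by linarith [hx.2])
      have hexp : Real.exp (-K) ≤ Real.exp (-(x / s)) := Real.exp_le_exp.2 (by linarith)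
      exact mul_le_mul hexp hx1.le hs.le (Real.exp_pos _).le
    have hνKs : ν (Set.Ioi (K * s)) ≠ ⊤ := by
      rw [htail _ (by positivity)]; exact ENNReal.ofReal_ne_top
    have hdiff : ν (Set.Ioc s (K * s)) = ν (Set.Ioi s) - ν (Set.Ioi (K * s)) := by
      rw [← Set.Ioi_diff_Ioi]
      exact measure_diff (Ioi_subset_Ioi hKs) measurableSet_Ioi.nullMeasurableSet hνKs
    have step3 : ENNReal.ofReal (A * s ^ (-α) - B * (K * s) ^ (-α)) ≤ ν (Set.Ioc s (K * s)) := by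
      rw [hdiff, ENNReal.ofReal_sub _ (by positivity)]
      exact tsub_le_tsub (tail_lb s hs) (tail_ub (K * s) (by positivity))
    have step4 : ENNReal.ofReal (c₀ / B * (s ^ (1 - α) * θ (Real.log s)))
        ≤ ENNReal.ofReal (Real.exp (-K) * s) * ENNReal.ofReal (A * s ^ (-α) - B * (K * s) ^ (-α)) := by
      rw [← ENNReal.ofReal_mul (by positivity)]
      apply ENNReal.ofReal_le_ofReal
      have hrw : (K * s) ^ (-α) = K ^ (-α) * s ^ (-α) :=
        Real.mul_rpow hKpos.le hs.le
      have hθub : θ (Real.log s) ≤ B := (hbd (Real.log s)).2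
      have key : Real.exp (-K) * s * (A * s ^ (-α) - B * (K * s) ^ (-α))
          = c₀ * s ^ (1 - α) := by
        rw [hrw, hc₀def, ← hgap, ← hpow]; ring
      rw [key]
      have hKB : c₀ / B * B = c₀ := div_mul_cancel₀ c₀ hB.ne'
      calc c₀ / B * (s ^ (1 - α) * θ (Real.log s))
          ≤ c₀ / B * (s ^ (1 - α) * B) := by
            apply mul_le_mul_of_nonneg_left _ (by positivity)
            exact mul_le_mul_of_nonneg_left hθub hspow.le
        _ = c₀ / B * B * s ^ (1 - α) := by ring
        _ = c₀ * s ^ (1 - α) := by rw [hKB]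
    calc ENNReal.ofReal (c₀ / B * (s ^ (1 - α) * θ (Real.log s)))
        ≤ ENNReal.ofReal (Real.exp (-K) * s) * ENNReal.ofReal (A * s ^ (-α) - B * (K * s) ^ (-α)) := step4
      _ ≤ ENNReal.ofReal (Real.exp (-K) * s) * ν (Set.Ioc s (K * s)) := mul_le_mul' le_rfl step3
      _ ≤ ∫⁻ x in Set.Ioc s (K * s), ENNReal.ofReal (Real.exp (-(x / s)) * x) ∂ν := step2
      _ ≤ _ := step1
  · -- UPPER BOUND
    have hsplit : Set.Ioi (0:ℝ) = Set.Ioc 0 s ∪ Set.Ioi s := (Ioc_union_Ioi_eq_Ioi hs.le).symm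
    rw [hsplit, lintegral_union measurableSet_Ioi (Ioc_disjoint_Ioi le_rfl)]
    -- part 2
    have part2 : ∫⁻ x in Set.Ioi s, ENNReal.ofReal (Real.exp (-(x / s)) * x) ∂ν
        ≤ ENNReal.ofReal (B * Real.exp (-1) * s ^ (1 - α)) := by
      have h1 : ∫⁻ x in Set.Ioi s, ENNReal.ofReal (Real.exp (-(x / s)) * x) ∂ν
          ≤ ∫⁻ _ in Set.Ioi s, ENNReal.ofReal (Real.exp (-1) * s) ∂ν := by
        apply setLIntegral_mono measurable_const
        intro x hx
        apply ENNReal.ofReal_le_ofReal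
        have hx1 : s < x := hx
        have hu : 1 ≤ x / s := (one_le_div hs).2 hx1.le
        have := mul_exp_neg_le_exp_neg_one hu
        calc Real.exp (-(x / s)) * x = (Real.exp (-(x / s)) * (x / s)) * s := by
              field_simp
          _ ≤ Real.exp (-1) * s := mul_le_mul_of_nonneg_right this hs.le
      rw [setLIntegral_const] at h1
      refine h1.trans ?_
      calc ENNReal.ofReal (Real.exp (-1) * s) * ν (Set.Ioi s)
          ≤ ENNReal.ofReal (Real.exp (-1) * s) * ENNReal.ofReal (B * s ^ (-α)) :=
            mul_le_mul' le_rfl (tail_ub s hs)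
        _ = ENNReal.ofReal (B * Real.exp (-1) * s ^ (1 - α)) := by
            rw [← ENNReal.ofReal_mul (by positivity)]
            congr 1
            rw [← hpow]; ring
    -- part 1
    have part1 : ∫⁻ x in Set.Ioc 0 s, ENNReal.ofReal (Real.exp (-(x / s)) * x) ∂ν
        ≤ ENNReal.ofReal (B / (1 - α) * s ^ (1 - α)) := by
      have h1 : ∫⁻ x in Set.Ioc 0 s, ENNReal.ofReal (Real.exp (-(x / s)) * x) ∂ν
          ≤ ∫⁻ x in Set.Ioc 0 s, ENNReal.ofReal x ∂ν := by
        apply setLIntegral_mono ENNReal.measurable_ofReal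
        intro x hx
        apply ENNReal.ofReal_le_ofReal
        have hexp : Real.exp (-(x / s)) ≤ 1 :=
          Real.exp_le_one_iff.2 (neg_nonpos.2 (div_nonneg hx.1.le hs.le))
        nlinarith [hx.1]
      have h2 : ∫⁻ x in Set.Ioc 0 s, ENNReal.ofReal x ∂ν
          = ∫⁻ t in Set.Ioi (0:ℝ), ν (Set.Ioi t ∩ Set.Ioc 0 s) := by
        have := lintegral_eq_lintegral_meas_lt (ν.restrict (Set.Ioc 0 s))
          (f := fun x => x)
          (ae_restrict_of_forall_mem measurableSet_Ioc (fun x hx => hx.1.le))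
          measurable_id.aemeasurable
        rw [this]
        congr 1
        ext t
        rw [show {a : ℝ | t < a} = Set.Ioi t from rfl,
          Measure.restrict_apply measurableSet_Ioi]
      have h3 : ∫⁻ t in Set.Ioi (0:ℝ), ν (Set.Ioi t ∩ Set.Ioc 0 s)
          ≤ ∫⁻ t in Set.Ioi (0:ℝ),
              (Set.Ioo 0 s).indicator (fun t => ENNReal.ofReal (B * t ^ (-α))) t := by
        apply setLIntegral_mono
        · exact (Measurable.indicator (by fun_prop) measurableSet_Ioo)
        · intro t ht
          by_cases h : t < s
          · rw [Set.indicator_of_mem (Set.mem_Ioo.mpr ⟨ht, h⟩)]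
            exact (measure_mono Set.inter_subset_left).trans (tail_ub t ht)
          · rw [Set.indicator_of_notMem (fun hmem => h hmem.2)]
            have : Set.Ioi t ∩ Set.Ioc 0 s = ∅ := by
              ext a
              simp only [Set.mem_inter_iff, Set.mem_Ioi, Set.mem_Ioc, Set.mem_empty_iff_false,
                iff_false, not_and, and_imp]
              intro hta h0a has
              exact h (lt_of_lt_of_le hta has)
            rw [this, measure_empty]
      have h4 : ∫⁻ t in Set.Ioi (0:ℝ),
            (Set.Ioo 0 s).indicator (fun t => ENNReal.ofReal (B * t ^ (-α))) t
          = ∫⁻ t in Set.Ioo (0:ℝ) s, ENNReal.ofReal (B * t ^ (-α)) := by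
        rw [lintegral_indicator measurableSet_Ioo, Measure.restrict_restrict measurableSet_Ioo,
          Set.inter_eq_self_of_subset_left (fun x hx => hx.1)]
      have h5 : ∫⁻ t in Set.Ioo (0:ℝ) s, ENNReal.ofReal (B * t ^ (-α))
          = ENNReal.ofReal (B / (1 - α) * s ^ (1 - α)) := by
        have hint : IntegrableOn (fun t : ℝ => t ^ (-α)) (Set.Ioo 0 s) volume := by
          rw [← intervalIntegrable_iff_integrableOn_Ioo_of_le hs.le]
          exact intervalIntegral.intervalIntegrable_rpow' (by linarith)
        have hint2 : IntegrableOn (fun t : ℝ => B * t ^ (-α)) (Set.Ioo 0 s) volume :=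
          hint.const_mul B
        rw [← ofReal_integral_eq_lintegral_ofReal hint2
          (ae_restrict_of_forall_mem measurableSet_Ioo
            (fun x hx => mul_nonneg hB.le (Real.rpow_nonneg hx.1.le _)))]
        congr 1
        rw [MeasureTheory.integral_const_mul]
        rw [← MeasureTheory.integral_Ioc_eq_integral_Ioo,
          ← intervalIntegral.integral_of_le hs.le,
          integral_rpow (Or.inl (by linarith))]
        rw [Real.zero_rpow (by linarith : -α + 1 ≠ 0)]
        rw [show -α + 1 = 1 - α by ring]
        field_simp
        rw [sub_zero]
      calc ∫⁻ x in Set.Ioc 0 s, ENNReal.ofReal (Real.exp (-(x / s)) * x) ∂ν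
          ≤ ∫⁻ x in Set.Ioc 0 s, ENNReal.ofReal x ∂ν := h1
        _ = _ := h2
        _ ≤ _ := h3
        _ = _ := h4
        _ = _ := h5
    calc ∫⁻ x in Set.Ioc 0 s, ENNReal.ofReal (Real.exp (-(x / s)) * x) ∂ν
          + ∫⁻ x in Set.Ioi s, ENNReal.ofReal (Real.exp (-(x / s)) * x) ∂ν
        ≤ ENNReal.ofReal (B / (1 - α) * s ^ (1 - α))
          + ENNReal.ofReal (B * Real.exp (-1) * s ^ (1 - α)) := add_le_add part1 part2
      _ = ENNReal.ofReal (C₁ * s ^ (1 - α)) := by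
          rw [← ENNReal.ofReal_add (by positivity) (by positivity)]
          congr 1
          rw [hC₁def]; ring
      _ ≤ ENNReal.ofReal (C₁ / A * (s ^ (1 - α) * θ (Real.log s))) := by
          apply ENNReal.ofReal_le_ofReal
          have hθlb : A ≤ θ (Real.log s) := (hbd (Real.log s)).1
          have : C₁ / A * A = C₁ := div_mul_cancel₀ C₁ hA.ne'
          calc C₁ * s ^ (1 - α) = C₁ / A * (s ^ (1 - α) * A) := by
                linear_combination s ^ (1 - α) * this.symm
            _ ≤ C₁ / A * (s ^ (1 - α) * θ (Real.log s)) := by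
                apply mul_le_mul_of_nonneg_left _ (by positivity)
                exact mul_le_mul_of_nonneg_left hθlb hspow.le
end

section
/- Let $\mu$ be a probability measure on $[0,\infty)$ with Laplace transform $\bar\mu(s)=\int_0^\infty e^{-sx}\mu(dx)$ satisfying $\bar\mu(s)\le \exp(-K s^{\alpha})$ for all $s>0$, for some constants $K>0$ and $0<\alpha<1$. Then there exists a constant $\tilde K>0$ such that $\mu[0,x]\le \exp\big(-\tilde K\, x^{-\alpha/(1-\alpha)}\big)$ for all $x>0$. -/
open MeasureTheory Set

/-- De Bruijn-type Tauberian bound: an exponential bound `μ̄(s) ≤ exp(-K s^α)` on the Laplace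
transform of a probability measure on `[0,∞)` gives a stretched-exponential lower-tail bound. -/
theorem deBruijn_tauberian (μ : Measure ℝ) [IsProbabilityMeasure μ]
    (hsupp : μ (Set.Iio (0:ℝ)) = 0) (K α : ℝ) (hK : 0 < K) (hα0 : 0 < α) (hα1 : α < 1)
    (hLT : ∀ s : ℝ, 0 < s →
      ∫⁻ t, ENNReal.ofReal (Real.exp (-(s * t))) ∂μ
        ≤ ENNReal.ofReal (Real.exp (-(K * s ^ α)))) :
    ∃ K' : ℝ, 0 < K' ∧ ∀ x : ℝ, 0 < x →
      μ (Set.Icc 0 x) ≤ ENNReal.ofReal (Real.exp (-(K' * x ^ (-(α / (1 - α)))))) := by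
  have h1α : 0 < 1 - α := by linarith
  set β : ℝ := (1 - α)⁻¹ with hβ
  have hβpos : 0 < β := inv_pos.2 h1α
  set c : ℝ := K / 2 with hc
  have hcpos : 0 < c := by positivity
  refine ⟨c ^ β, Real.rpow_pos_of_pos hcpos β, ?_⟩
  intro x hx
  set s : ℝ := (c / x) ^ β with hs
  have hspos : 0 < s := Real.rpow_pos_of_pos (by positivity) β
  have step1 : ENNReal.ofReal (Real.exp (-(s * x))) * μ (Set.Icc 0 x)
      ≤ ∫⁻ t, ENNReal.ofReal (Real.exp (-(s * t))) ∂μ := by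
    calc ENNReal.ofReal (Real.exp (-(s * x))) * μ (Set.Icc 0 x)
        = ∫⁻ _ in Set.Icc 0 x, ENNReal.ofReal (Real.exp (-(s * x))) ∂μ := by
          rw [setLIntegral_const, mul_comm]
      _ ≤ ∫⁻ t in Set.Icc 0 x, ENNReal.ofReal (Real.exp (-(s * t))) ∂μ := by
          apply setLIntegral_mono (by fun_prop)
          intro t ht
          apply ENNReal.ofReal_le_ofReal
          apply Real.exp_le_exp.2
          nlinarith [ht.2, hspos]
      _ ≤ ∫⁻ t, ENNReal.ofReal (Real.exp (-(s * t))) ∂μ := setLIntegral_le_lintegral _ _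
  have step2 := le_trans step1 (hLT s hspos)
  have key : μ (Set.Icc 0 x) ≤ ENNReal.ofReal (Real.exp (s * x - K * s ^ α)) := by
    have h0 : ENNReal.ofReal (Real.exp (s * x))
        * (ENNReal.ofReal (Real.exp (-(s * x))) * μ (Set.Icc 0 x)) = μ (Set.Icc 0 x) := by
      rw [← mul_assoc, ← ENNReal.ofReal_mul (Real.exp_pos _).le, ← Real.exp_add]
      simp
    calc μ (Set.Icc 0 x) = _ := h0.symm
      _ ≤ ENNReal.ofReal (Real.exp (s * x)) * ENNReal.ofReal (Real.exp (-(K * s ^ α))) :=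
          mul_le_mul_right step2 _
      _ = ENNReal.ofReal (Real.exp (s * x - K * s ^ α)) := by
          rw [← ENNReal.ofReal_mul (Real.exp_pos _).le, ← Real.exp_add]; ring_nf
  have hαβ : α / (1 - α) = α * β := by rw [hβ, div_eq_mul_inv]
  have hb1 : (1 : ℝ) - β = -(α * β) := by
    rw [hβ]; field_simp; ring
  have hsx : s * x = c ^ β * x ^ (-(α * β)) := by
    rw [hs, Real.div_rpow hcpos.le hx.le, ← hb1, Real.rpow_sub hx, Real.rpow_one]
    field_simp
  have hsa : s ^ α = c ^ (β * α) * x ^ (-(α * β)) := by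
    rw [hs, ← Real.rpow_mul (by positivity), Real.div_rpow hcpos.le hx.le,
      div_eq_mul_inv, ← Real.rpow_neg hx.le, mul_comm α β]
  have hc1 : c * c ^ (β * α) = c ^ β := by
    have h := Real.rpow_add hcpos 1 (β * α)
    rw [Real.rpow_one] at h
    rw [← h]
    congr 1
    rw [hβ]; field_simp; ring
  have hexp : s * x - K * s ^ α = -(c ^ β * x ^ (-(α / (1 - α)))) := by
    rw [hαβ, hsx, hsa, hc]
    have : K / 2 * (K / 2) ^ (β * α) = (K / 2) ^ β := by rw [← hc]; exact hc1
    linear_combination (-2 * x ^ (-(α * β))) * this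
  rw [hexp] at key
  exact key
end

section
/- Let $X=\{X(t)\}_{t\ge0}$ be a $(c^{1/\alpha},c)$-semistable subordinator with $0<\alpha<1$ and $c>1$. Then there exists a constant $\tilde K_5>0$ such that $\mathbb{P}(X(r)\le x)\le \exp\big(-\tilde K_5\, x^{-\alpha/(1-\alpha)}\big)$ for all $r\in[1,c]$ and all $x>0$. -/
open MeasureTheory ProbabilityTheory Set

noncomputable section

variable {Ω : Type*} [MeasurableSpace Ω]

/-- The process `X` has càdlàg paths on `[0,∞)` almost surely. -/
def HasCadlagPaths {E : Type*} [TopologicalSpace E] (P : Measure Ω) (X : ℝ → Ω → E) : Prop :=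
  ∀ᵐ ω ∂P,
    (∀ t : ℝ, 0 ≤ t →
      Filter.Tendsto (fun s => X s ω) (nhdsWithin t (Set.Ici t)) (nhds (X t ω))) ∧
    (∀ t : ℝ, 0 < t →
      ∃ l, Filter.Tendsto (fun s => X s ω) (nhdsWithin t (Set.Iio t)) (nhds l))

/-- `X` is a Lévy process under `P`: measurable, starts at `0`, has stationary and
independent increments, and càdlàg paths. -/
def IsLevyProcess {E : Type*} [NormedAddCommGroup E] [MeasurableSpace E] [BorelSpace E]
    (P : Measure Ω) (X : ℝ → Ω → E) : Prop :=
  (∀ t, Measurable (X t)) ∧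
  (∀ᵐ ω ∂P, X 0 ω = 0) ∧
  (∀ s t : ℝ, 0 ≤ s → 0 ≤ t →
    Measure.map (fun ω => X (s + t) ω - X s ω) P = Measure.map (X t) P) ∧
  (∀ (n : ℕ) (t : Fin (n + 1) → ℝ), 0 ≤ t 0 → Monotone t →
    iIndepFun
      (fun (i : Fin n) ω => X (t i.succ) ω - X (t i.castSucc) ω) P) ∧
  HasCadlagPaths P X

/-- All finite-dimensional distributions of `{X(ct)}` coincide with those of `{T(X(t))}`. -/
def FDScaling {E : Type*} [NormedAddCommGroup E] [MeasurableSpace E]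
    (P : Measure Ω) (X : ℝ → Ω → E) (c : ℝ) (T : E → E) : Prop :=
  ∀ (n : ℕ) (t : Fin n → ℝ), (∀ i, 0 ≤ t i) →
    Measure.map (fun ω (i : Fin n) => X (c * t i) ω) P
      = Measure.map (fun ω (i : Fin n) => T (X (t i) ω)) P

/-- A measure on `ℝ^d` is full if it is not concentrated on any hyperplane. -/
def IsFull {d : ℕ} (μ : Measure (EuclideanSpace ℝ (Fin d))) : Prop :=
  ∀ (v : EuclideanSpace ℝ (Fin d)) (b : ℝ), v ≠ 0 →
    μ {x | (inner ℝ v x : ℝ) = b} ≠ μ Set.univ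

/-- `X` is a `(c^A, c)`-operator semistable Lévy process with exponent `A`. -/
def IsOpSemistable {d : ℕ} (P : Measure Ω) (X : ℝ → Ω → EuclideanSpace ℝ (Fin d)) (c : ℝ)
    (A : EuclideanSpace ℝ (Fin d) →L[ℝ] EuclideanSpace ℝ (Fin d)) : Prop :=
  IsLevyProcess P X ∧ IsFull (Measure.map (X 1) P) ∧
  FDScaling P X c (fun x => NormedSpace.exp ((Real.log c) • A) x)

/-- The principal spectral block of the exponent `A` is the subspace `V`, on which `A` acts
diagonally as `α1⁻¹ • id`; the complementary invariant subspace `Vᗮ` corresponds to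
eigenvalues with strictly larger real parts (expressed through the growth of `t^A` on `Vᗮ`). -/
def PrincipalDiagonal {d : ℕ} (A : EuclideanSpace ℝ (Fin d) →L[ℝ] EuclideanSpace ℝ (Fin d))
    (V : Submodule ℝ (EuclideanSpace ℝ (Fin d))) (α1 : ℝ) : Prop :=
  (∀ x ∈ V, A x = α1⁻¹ • x) ∧ (∀ x ∈ Vᗮ, A x ∈ Vᗮ) ∧
  (∃ a2 : ℝ, α1⁻¹ < a2 ∧ ∀ δ : ℝ, 0 < δ → ∃ K : ℝ, 0 < K ∧
    ∀ t ∈ Set.Ioc (0:ℝ) 1, ∀ x ∈ Vᗮ,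
      ‖NormedSpace.exp ((Real.log t) • A) x‖ ≤ K * t ^ (a2 - δ) * ‖x‖)

/-- `X(1)` has a continuous density `p` with `p 0 > 0` (type `A`). -/
def IsTypeA {d : ℕ} (P : Measure Ω) (X : ℝ → Ω → EuclideanSpace ℝ (Fin d)) : Prop :=
  ∃ p : EuclideanSpace ℝ (Fin d) → ℝ, Continuous p ∧
    Measure.map (X 1) P = volume.withDensity (fun x => ENNReal.ofReal (p x)) ∧ 0 < p 0

/-- `X(1)` has a continuous density `p` with `p 0 = 0` (type `B`). -/
def IsTypeB {d : ℕ} (P : Measure Ω) (X : ℝ → Ω → EuclideanSpace ℝ (Fin d)) : Prop :=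
  ∃ p : EuclideanSpace ℝ (Fin d) → ℝ, Continuous p ∧
    Measure.map (X 1) P = volume.withDensity (fun x => ENNReal.ofReal (p x)) ∧ p 0 = 0

/-- Sojourn time of `X` in the closed ball `B(0,a)` up to time `s`. -/
def sojourn {d : ℕ} (X : ℝ → Ω → EuclideanSpace ℝ (Fin d)) (a s : ℝ) (ω : Ω) : ℝ :=
  (volume {t : ℝ | t ∈ Set.Icc 0 s ∧ ‖X t ω‖ ≤ a}).toReal

open scoped ENNReal

/-- Expectation of a product of independent, a.e.-bounded random variables. -/
lemma aux_prod_integral {ι : Type*} {f : ι → Ω → ℝ} {P : Measure Ω} [IsProbabilityMeasure P]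
    (hind : iIndepFun f P)
    (hmeas : ∀ i, Measurable (f i)) (hbd : ∀ i, ∀ᵐ ω ∂P, |f i ω| ≤ 1) (s : Finset ι) :
    ∫ ω, ∏ j ∈ s, f j ω ∂P = ∏ j ∈ s, ∫ ω, f j ω ∂P := by
  have hint : ∀ s : Finset ι, Integrable (fun ω => ∏ j ∈ s, f j ω) P := by
    intro s
    refine (integrable_const (1:ℝ)).mono' ?_ ?_
    · exact (Finset.measurable_prod s fun i _ => hmeas i).aestronglyMeasurable
    · have hb : ∀ᵐ ω ∂P, ∀ j ∈ s, |f j ω| ≤ 1 :=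
        (ae_ball_iff s.countable_toSet).2 fun j _ => hbd j
      filter_upwards [hb] with ω hω
      rw [Real.norm_eq_abs, Finset.abs_prod]
      exact Finset.prod_le_one (fun i _ => abs_nonneg _) (fun i hi => hω i hi)
  classical
  induction s using Finset.induction_on with
  | empty => simp
  | @insert i s hi ih =>
    have hip : IndepFun (∏ j ∈ s, f j) (f i) P :=
      hind.indepFun_finsetProd_of_notMem hmeas hi
    have h1 : (fun ω => ∏ j ∈ insert i s, f j ω) = (fun ω => (∏ j ∈ s, f j ω) * f i ω) := by
      funext ω; rw [Finset.prod_insert hi, mul_comm]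
    rw [Finset.prod_insert hi, h1]
    have hs : Integrable (∏ j ∈ s, f j) P := by
      have := hint s
      rwa [show (∏ j ∈ s, f j) = fun ω => ∏ j ∈ s, f j ω from
        funext fun ω => by simp [Finset.prod_apply]]
    have := hip.integral_mul_eq_mul_integral hs.1
      ((integrable_const (1:ℝ)).mono' (hmeas i).aestronglyMeasurable
        ((hbd i).mono fun ω h => by simpa [Real.norm_eq_abs] using h)).1
    rw [show ((∏ j ∈ s, f j) * f i) = fun ω => (∏ j ∈ s, f j ω) * f i ω from
        funext fun ω => by simp [Finset.prod_apply],
      show (∏ j ∈ s, f j) = fun ω => ∏ j ∈ s, f j ω from funext fun ω => by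
        simp [Finset.prod_apply]] at this
    rw [this, ih, mul_comm]

/-- half of a real `≥ 1` is at most its floor -/
lemma aux_half_le_floor (y : ℝ) (hy : 1 ≤ y) : y / 2 ≤ (⌊y⌋₊ : ℝ) := by
  rcases le_or_gt 2 y with h | h
  · have := Nat.sub_one_lt_floor y
    linarith
  · have h1 : (1:ℕ) ≤ ⌊y⌋₊ := Nat.le_floor (by exact_mod_cast hy)
    have : (1:ℝ) ≤ (⌊y⌋₊:ℝ) := by exact_mod_cast h1
    linarith

/-- ceiling of a real `≥ 1` is at most twice it -/
lemma aux_ceil_le_two_mul (y : ℝ) (hy : 1 ≤ y) : (⌈y⌉₊ : ℝ) ≤ 2 * y := by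
  have := Nat.ceil_lt_add_one (by linarith : (0:ℝ) ≤ y)
  linarith

set_option maxHeartbeats 1000000 in
/-- Small-ball estimate for a `(c^{1/α},c)`-semistable subordinator:
`P(X(r) ≤ x) ≤ exp(-K x^{-α/(1-α)})` uniformly for `r ∈ [1,c]`. -/
theorem semistable_subordinator_small_ball (P : Measure Ω) [IsProbabilityMeasure P]
    (X : ℝ → Ω → ℝ) (α c : ℝ) (hα0 : 0 < α) (hα1 : α < 1) (hc : 1 < c)
    (hlevy : IsLevyProcess P X)
    (hinc : ∀ᵐ ω ∂P, ∀ s t : ℝ, 0 ≤ s → s < t → X s ω < X t ω)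
    (hscale : FDScaling P X c (fun x => c ^ (α⁻¹) * x)) :
    ∃ K : ℝ, 0 < K ∧ ∀ r ∈ Set.Icc (1:ℝ) c, ∀ x : ℝ, 0 < x →
      P {ω | X r ω ≤ x} ≤ ENNReal.ofReal (Real.exp (-(K * x ^ (-(α / (1 - α)))))) := by
  classical
  obtain ⟨hm, hX0, hstat, hind, -⟩ := hlevy
  -- ## constants
  have hc0 : (0:ℝ) < c := lt_trans one_pos hc
  have hα1' : (0:ℝ) < 1 - α := by linarith
  set γ : ℝ := α / (1 - α) with hγdef
  have hγ : 0 < γ := div_pos hα0 hα1'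
  have hia : 1 < α⁻¹ := (one_lt_inv_iff₀).2 ⟨hα0, hα1⟩
  set a : ℝ := c ^ (α⁻¹) with hadef
  set b : ℝ := c ^ (α⁻¹ - 1) with hbdef
  have ha1 : 1 < a := Real.one_lt_rpow_iff_of_pos hc0 |>.2 (Or.inl ⟨hc, by linarith⟩)
  have hb1 : 1 < b := Real.one_lt_rpow_iff_of_pos hc0 |>.2 (Or.inl ⟨hc, by linarith⟩)
  have ha0 : (0:ℝ) < a := lt_trans one_pos ha1
  have hb0 : (0:ℝ) < b := lt_trans one_pos hb1
  have hab : a = c * b := by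
    calc a = c ^ (α⁻¹) := hadef
      _ = c ^ ((1:ℝ) + (α⁻¹ - 1)) := by norm_num
      _ = c ^ (1:ℝ) * c ^ (α⁻¹ - 1) := Real.rpow_add hc0 _ _
      _ = c * b := by rw [Real.rpow_one, hbdef]
  have hcoef : (α⁻¹ - 1) * γ = 1 := by
    rw [hγdef]
    field_simp
  have hbγ : ∀ m : ℕ, ((b^m : ℝ))^γ = c^m := by
    intro m
    rw [hbdef, ← Real.rpow_natCast (c ^ (α⁻¹ - 1)) m, ← Real.rpow_mul hc0.le,
      ← Real.rpow_mul hc0.le, show (α⁻¹ - 1) * (m:ℝ) * γ = (α⁻¹-1)*γ*m by ring, hcoef,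
      one_mul, Real.rpow_natCast]
  -- ## distributional transfer lemmas
  have hTint : ∀ (g h : Ω → ℝ), Measurable g → Measurable h →
      Measure.map g P = Measure.map h P →
      ∫ ω, Real.exp (-(g ω)) ∂P = ∫ ω, Real.exp (-(h ω)) ∂P := by
    intro g h hg hh heq
    have hcont : Continuous fun y : ℝ => Real.exp (-y) :=
      Real.continuous_exp.comp continuous_neg
    rw [← integral_map hg.aemeasurable hcont.aestronglyMeasurable,
        ← integral_map hh.aemeasurable hcont.aestronglyMeasurable, heq]
  have hTtail : ∀ (g h : Ω → ℝ), Measurable g → Measurable h →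
      Measure.map g P = Measure.map h P → ∀ z : ℝ,
      P {ω | z < g ω} = P {ω | z < h ω} := by
    intro g h hg hh heq z
    have h1 : {ω | z < g ω} = g ⁻¹' (Ioi z) := rfl
    have h2 : {ω | z < h ω} = h ⁻¹' (Ioi z) := rfl
    rw [h1, h2, ← Measure.map_apply hg measurableSet_Ioi,
      ← Measure.map_apply hh measurableSet_Ioi, heq]
  -- ## a.e. path facts
  have hmono : ∀ᵐ ω ∂P, ∀ s t : ℝ, 0 ≤ s → s ≤ t → X s ω ≤ X t ω :=
    hinc.mono fun ω h s t hs hst =>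
      hst.eq_or_lt.elim (fun e => e ▸ le_rfl) fun l => (h s t hs l).le
  have hnn : ∀ᵐ ω ∂P, ∀ t : ℝ, 0 ≤ t → 0 ≤ X t ω := by
    filter_upwards [hX0, hmono] with ω h0 hmo
    intro t ht
    have := hmo 0 t le_rfl ht
    rwa [h0] at this
  -- ## integrability of Laplace functionals
  have hintExp : ∀ (lam t : ℝ), 0 ≤ lam → 0 ≤ t →
      Integrable (fun ω => Real.exp (-(lam * X t ω))) P := by
    intro lam t hlam ht
    refine (integrable_const (1:ℝ)).mono' ?_ ?_
    · exact (Real.measurable_exp.comp ((hm t).const_mul lam).neg).aestronglyMeasurable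
    · filter_upwards [hnn] with ω hω
      rw [Real.norm_eq_abs, abs_of_pos (Real.exp_pos _), Real.exp_le_one_iff]
      simp only [neg_nonpos]
      exact mul_nonneg hlam (hω t ht)
  -- ## a positive tail point
  have hy0 : ∃ y0 : ℝ, 0 < y0 ∧ 0 < (P {ω | y0 < X 1 ω}).toReal := by
    by_contra hcon
    push_neg at hcon
    have hz : ∀ k : ℕ, ∀ᵐ ω ∂P, ¬ ((1:ℝ)/(k+1) < X 1 ω) := by
      intro k
      have hpos : (0:ℝ) < 1/(k+1) := by positivity
      have h0 : (P {ω | (1:ℝ)/(k+1) < X 1 ω}).toReal = 0 :=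
        le_antisymm (hcon (1/(k+1)) hpos) ENNReal.toReal_nonneg
      have hP0 : P {ω | (1:ℝ)/(k+1) < X 1 ω} = 0 :=
        ((ENNReal.toReal_eq_zero_iff _).1 h0).elim id
          (fun ht => absurd ht (measure_ne_top P _))
      exact ae_iff.2 (by simpa [not_lt] using hP0)
    have hall : ∀ᵐ ω ∂P, ∀ k : ℕ, ¬ ((1:ℝ)/(k+1) < X 1 ω) := ae_all_iff.2 hz
    have hpos1 : ∀ᵐ ω ∂P, 0 < X 1 ω := by
      filter_upwards [hX0, hinc] with ω h0 hi
      have := hi 0 1 le_rfl one_pos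
      rwa [h0] at this
    have hFalse : ∀ᵐ ω ∂P, False := by
      filter_upwards [hall, hpos1] with ω hk hp
      obtain ⟨k, hk'⟩ := exists_nat_one_div_lt hp
      exact hk k (by simpa using hk')
    exact absurd hFalse.exists (by simp)
  obtain ⟨y0, hy00, hρ0⟩ := hy0
  set ρ : ℝ := (P {ω | y0 < X 1 ω}).toReal with hρdef
  have hAmeas : MeasurableSet {ω | y0 < X 1 ω} := measurableSet_lt measurable_const (hm 1)
  -- ## telescoping sums
  have htel : ∀ (M : ℕ) (ω : Ω), X 0 ω = 0 →
      ∑ i : Fin M, (X ((i:ℝ)+1) ω - X ((i:ℝ)) ω) = X ((M:ℕ):ℝ) ω := by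
    intro M ω h0
    have h2 : ∑ i : Fin M, (X ((i:ℝ)+1) ω - X ((i:ℝ)) ω)
        = ∑ i ∈ Finset.range M, (X ((i:ℝ)+1) ω - X ((i:ℝ)) ω) :=
      Fin.sum_univ_eq_sum_range (fun j : ℕ => X ((j:ℝ)+1) ω - X ((j:ℝ)) ω) M
    have h3 : ∑ i ∈ Finset.range M, (X ((i:ℝ)+1) ω - X ((i:ℝ)) ω)
        = X ((M:ℕ):ℝ) ω - X ((0:ℕ):ℝ) ω := by
      have := Finset.sum_range_sub (fun j : ℕ => X ((j:ℝ)) ω) M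
      simp only [Nat.cast_add, Nat.cast_one] at this
      rw [← this]
    rw [h2, h3]
    simp [h0]
  -- ## scaling of one-dimensional distributions
  have hstep : ∀ t : ℝ, 0 ≤ t →
      Measure.map (X (c*t)) P = Measure.map (fun ω => a * X t ω) P := by
    intro t ht
    have h := hscale 1 (fun _ => t) (fun _ => ht)
    have e0 : Measurable (fun f : Fin 1 → ℝ => f 0) := measurable_pi_apply 0
    have h1 := congrArg (Measure.map (fun f : Fin 1 → ℝ => f 0)) h
    rwa [Measure.map_map e0 (measurable_pi_lambda _ (fun _ => hm _)),
      Measure.map_map e0 (measurable_pi_lambda _ (fun _ => (hm _).const_mul _))] at h1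
  have hmapn : ∀ n : ℕ, Measure.map (X (c^n)) P
      = Measure.map (fun ω => a^n * X 1 ω) P := by
    intro n
    induction n with
    | zero => simp
    | succ n ih =>
      have h1 : (c:ℝ)^(n+1) = c * c^n := by ring
      rw [h1, hstep (c^n) (le_of_lt (pow_pos hc0 n)),
        show (fun ω => a * X (c^n) ω) = (fun y => a * y) ∘ (X (c^n)) from rfl,
        ← Measure.map_map (measurable_const_mul a) (hm (c^n)), ih,
        Measure.map_map (measurable_const_mul a) ((hm 1).const_mul _)]
      congr 1
      funext ω
      show a * (a^n * X 1 ω) = a^(n+1) * X 1 ω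
      ring
  -- ## the Laplace transform at 1 is < 1
  set p : ℝ := ∫ ω, Real.exp (-(X 1 ω)) ∂P with hpdef
  have hp0 : 0 ≤ p := integral_nonneg fun ω => (Real.exp_pos _).le
  set β : ℝ := (1 - Real.exp (-y0)) * ρ with hβdef
  have hey0 : Real.exp (-y0) < 1 := Real.exp_lt_one_iff.2 (by linarith)
  have hβ0 : 0 < β := mul_pos (by linarith) hρ0
  have hpβ : p ≤ Real.exp (-β) := by
    have hpoint : ∀ᵐ ω ∂P, Real.exp (-(X 1 ω))
        ≤ 1 - (1 - Real.exp (-y0)) * Set.indicator {ω | y0 < X 1 ω} (fun _ => (1:ℝ)) ω := by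
      filter_upwards [hnn] with ω hω
      by_cases hmem : ω ∈ {ω | y0 < X 1 ω}
      · rw [Set.indicator_of_mem hmem]
        have h1 : Real.exp (-(X 1 ω)) ≤ Real.exp (-y0) :=
          Real.exp_le_exp.2 (neg_le_neg (le_of_lt hmem))
        have h2 : (1:ℝ) - (1 - Real.exp (-y0)) * 1 = Real.exp (-y0) := by ring
        rw [h2]
        exact h1
      · rw [Set.indicator_of_notMem hmem]
        have h1 : -(X 1 ω) ≤ 0 := neg_nonpos.2 (hω 1 one_pos.le)
        have := Real.exp_le_one_iff.2 h1
        linarith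
    have hint1 : Integrable (fun ω => Real.exp (-(X 1 ω))) P := by
      simpa [one_mul] using hintExp 1 1 zero_le_one zero_le_one
    have hint2 : Integrable (fun ω =>
        1 - (1 - Real.exp (-y0)) * Set.indicator {ω | y0 < X 1 ω} (fun _ => (1:ℝ)) ω) P :=
      (integrable_const 1).sub (((integrable_const (1:ℝ)).indicator hAmeas).const_mul _)
    have hcomp := integral_mono_ae hint1 hint2 hpoint
    have hrhs : ∫ ω, (1 - (1 - Real.exp (-y0))
        * Set.indicator {ω | y0 < X 1 ω} (fun _ => (1:ℝ)) ω) ∂P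
        = 1 - (1 - Real.exp (-y0)) * ρ := by
      rw [integral_sub (integrable_const 1)
        (((integrable_const (1:ℝ)).indicator hAmeas).const_mul _), integral_const,
        integral_const_mul, integral_indicator_const _ hAmeas]
      simp [hρdef, measureReal_def]
    rw [hrhs] at hcomp
    have h1 : p ≤ 1 - β := by rw [hβdef]; exact hcomp
    have h2 := Real.add_one_le_exp (-β)
    linarith
  -- ## the Chernoff bound
  have chernoff : ∀ (n : ℕ) (x : ℝ), 0 < x →
      (P {ω | X 1 ω ≤ x}).toReal
        ≤ Real.exp (a^n * x - β * (⌊(c:ℝ)^n⌋₊ : ℝ)) := by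
    intro n x hx
    set lam : ℝ := a^n with hlamdef
    have hlam0 : 0 < lam := pow_pos ha0 n
    set M : ℕ := ⌊(c:ℝ)^n⌋₊ with hMdef
    have hcn1 : (1:ℝ) ≤ c^n := one_le_pow₀ hc.le
    have hMle : (M:ℝ) ≤ c^n := Nat.floor_le (by positivity)
    have step1 : (P {ω | X 1 ω ≤ x}).toReal
        ≤ Real.exp (lam * x) * ∫ ω, Real.exp (-(lam * X 1 ω)) ∂P := by
      have hA : MeasurableSet {ω | X 1 ω ≤ x} := measurableSet_le (hm 1) measurable_const
      have hent : (P {ω | X 1 ω ≤ x}).toReal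
          = ∫ ω, Set.indicator {ω | X 1 ω ≤ x} (fun _ => (1:ℝ)) ω ∂P := by
        rw [integral_indicator_const _ hA]; simp [measureReal_def]
      rw [hent, ← integral_const_mul]
      refine integral_mono ((integrable_const 1).indicator hA)
        ((hintExp lam 1 hlam0.le one_pos.le).const_mul _) ?_
      intro ω
      by_cases hω : ω ∈ {ω | X 1 ω ≤ x}
      · show _ ≤ Real.exp (lam * x) * Real.exp (-(lam * X 1 ω))
        rw [Set.indicator_of_mem hω, ← Real.exp_add]
        have hx1 : X 1 ω ≤ x := hω
        have : (0:ℝ) ≤ lam * x + -(lam * X 1 ω) := by nlinarith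
        exact Real.one_le_exp this
      · rw [Set.indicator_of_notMem hω]
        positivity
    have step2 : ∫ ω, Real.exp (-(lam * X 1 ω)) ∂P
        = ∫ ω, Real.exp (-(X (c^n) ω)) ∂P := by
      rw [hlamdef]
      exact (hTint (X (c^n)) (fun ω => a^n * X 1 ω) (hm _)
        ((hm 1).const_mul _) (hmapn n)).symm
    have step3 : ∫ ω, Real.exp (-(X (c^n) ω)) ∂P
        ≤ ∫ ω, Real.exp (-(X ((M:ℕ):ℝ) ω)) ∂P := by
      refine integral_mono_ae ?_ ?_ ?_
      · simpa [one_mul] using hintExp 1 (c^n) one_pos.le (by positivity)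
      · simpa [one_mul] using hintExp 1 ((M:ℕ):ℝ) one_pos.le (Nat.cast_nonneg M)
      · filter_upwards [hmono] with ω hω
        have := hω ((M:ℕ):ℝ) (c^n) (Nat.cast_nonneg M) hMle
        exact Real.exp_le_exp.2 (neg_le_neg this)
    have step4 : ∫ ω, Real.exp (-(X ((M:ℕ):ℝ) ω)) ∂P
        = ∫ ω, ∏ i : Fin M, Real.exp (-(X ((i:ℝ)+1) ω - X ((i:ℝ)) ω)) ∂P := by
      refine integral_congr_ae ?_
      filter_upwards [hX0] with ω h0
      rw [← Real.exp_sum]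
      congr 1
      have h1 : ∑ i : Fin M, -(X ((i:ℝ)+1) ω - X ((i:ℝ)) ω)
          = -∑ i : Fin M, (X ((i:ℝ)+1) ω - X ((i:ℝ)) ω) := by
        simp
      rw [h1]
      congr 1
      exact (htel M ω h0).symm
    have step5 : ∫ ω, ∏ i : Fin M, Real.exp (-(X ((i:ℝ)+1) ω - X ((i:ℝ)) ω)) ∂P
        = ∏ i : Fin M, ∫ ω, Real.exp (-(X ((i:ℝ)+1) ω - X ((i:ℝ)) ω)) ∂P := by
      have h00 : (0:ℝ) ≤ (((0 : Fin (M+1)) : ℕ) : ℝ) := by positivity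
      have hmon : Monotone (fun i : Fin (M+1) => ((i:ℕ):ℝ)) := by
        intro i j hij
        exact_mod_cast Nat.cast_le.2 hij
      have hI := hind M (fun i : Fin (M+1) => ((i:ℕ):ℝ)) h00 hmon
      have hfam : (fun (i : Fin M) ω =>
            X (((i.succ : Fin (M+1)) : ℕ):ℝ) ω - X (((i.castSucc : Fin (M+1)) : ℕ):ℝ) ω)
          = (fun (i : Fin M) ω => X ((i:ℝ)+1) ω - X ((i:ℝ)) ω) := by
        funext i ω
        rw [Fin.val_succ, Fin.coe_castSucc]
        push_cast
        ring_nf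
      rw [hfam] at hI
      have hIexp := hI.comp (fun _ => fun y => Real.exp (-y))
        (fun _ => Real.measurable_exp.comp measurable_neg)
      have hIexp' : iIndepFun
          (fun (i : Fin M) ω => Real.exp (-(X ((i:ℝ)+1) ω - X ((i:ℝ)) ω))) P := hIexp
      refine aux_prod_integral hIexp' ?_ ?_ Finset.univ
      · intro i
        exact Real.measurable_exp.comp ((hm _).sub (hm _)).neg
      · intro i
        filter_upwards [hmono] with ω hω
        rw [abs_of_pos (Real.exp_pos _), Real.exp_le_one_iff]
        simp only [neg_nonpos, sub_nonneg]
        exact hω ((i:ℝ)) ((i:ℝ)+1) (by positivity) (by linarith)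
    have step6 : ∀ i : Fin M, ∫ ω, Real.exp (-(X ((i:ℝ)+1) ω - X ((i:ℝ)) ω)) ∂P = p := by
      intro i
      exact hTint (fun ω => X ((i:ℝ)+1) ω - X ((i:ℝ)) ω) (X 1)
        ((hm _).sub (hm _)) (hm 1) (hstat (i:ℝ) 1 (by positivity) one_pos.le)
    have hprodp : ∏ i : Fin M, ∫ ω, Real.exp (-(X ((i:ℝ)+1) ω - X ((i:ℝ)) ω)) ∂P = p^M := by
      rw [Finset.prod_congr rfl fun i _ => step6 i]
      simp [Finset.card_univ]
    have hfinal : Real.exp (lam * x) * p^M ≤ Real.exp (a^n * x - β * M) := by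
      have h1 : p^M ≤ Real.exp (-β)^M := pow_le_pow_left₀ hp0 hpβ M
      have h2 : Real.exp (-β)^M = Real.exp (-(β * M)) := by
        rw [← Real.exp_nat_mul]
        ring_nf
      calc Real.exp (lam * x) * p^M ≤ Real.exp (lam * x) * Real.exp (-β)^M := by
            exact mul_le_mul_of_nonneg_left h1 (Real.exp_pos _).le
        _ = Real.exp (a^n * x - β * M) := by
            rw [h2, ← Real.exp_add]
            congr 1
    calc (P {ω | X 1 ω ≤ x}).toReal
        ≤ Real.exp (lam * x) * ∫ ω, Real.exp (-(lam * X 1 ω)) ∂P := step1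
      _ ≤ Real.exp (lam * x) * ∫ ω, Real.exp (-(X ((M:ℕ):ℝ) ω)) ∂P := by
          rw [step2]
          exact mul_le_mul_of_nonneg_left step3 (Real.exp_pos _).le
      _ = Real.exp (lam * x) * p^M := by rw [step4, step5, hprodp]
      _ ≤ Real.exp (a^n * x - β * M) := hfinal
  -- ## one-scale tail comparison
  have tailn : ∀ n : ℕ, P {ω | y0 < X 1 ω}
      ≤ (⌈(c:ℝ)^n⌉₊ : ℝ≥0∞) * P {ω | (a^n * y0) / (⌈(c:ℝ)^n⌉₊:ℝ) < X 1 ω} := by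
    intro n
    set M : ℕ := ⌈(c:ℝ)^n⌉₊ with hMdef
    have hcn1 : (1:ℝ) ≤ c^n := one_le_pow₀ hc.le
    have hM1 : 1 ≤ M := by
      rw [hMdef]
      exact Nat.one_le_ceil_iff.2 (by positivity)
    have hMpos : (0:ℝ) < (M:ℝ) := by exact_mod_cast hM1
    have hcnM : (c:ℝ)^n ≤ (M:ℝ) := Nat.le_ceil _
    set z : ℝ := a^n * y0 with hzdef
    set w : ℝ := z / (M:ℝ) with hwdef
    have h1 : {ω | y0 < X 1 ω} = {ω | z < a^n * X 1 ω} := by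
      ext ω
      simp only [Set.mem_setOf_eq, hzdef]
      exact (mul_lt_mul_iff_right₀ (pow_pos ha0 n)).symm
    have h2 : P {ω | z < a^n * X 1 ω} = P {ω | z < X (c^n) ω} :=
      (hTtail (X (c^n)) (fun ω => a^n * X 1 ω) (hm _) ((hm 1).const_mul _) (hmapn n) z).symm
    have h3 : P {ω | z < X (c^n) ω} ≤ P {ω | z < X ((M:ℕ):ℝ) ω} := by
      refine measure_mono_ae ?_
      filter_upwards [hmono] with ω hω hz
      exact lt_of_lt_of_le hz (hω (c^n) ((M:ℕ):ℝ) (by positivity) hcnM)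
    have h4 : P {ω | z < X ((M:ℕ):ℝ) ω}
        ≤ P (⋃ i : Fin M, {ω | w < X ((i:ℝ)+1) ω - X ((i:ℝ)) ω}) := by
      refine measure_mono_ae ?_
      filter_upwards [hX0] with ω h0 hz
      by_contra hcon
      have hcon' : ∀ i : Fin M, X ((i:ℝ)+1) ω - X ((i:ℝ)) ω ≤ w := fun i =>
        not_lt.1 fun h => hcon (Set.mem_iUnion.2 ⟨i, h⟩)
      have hsum : X ((M:ℕ):ℝ) ω ≤ (M:ℝ) * w := by
        rw [← htel M ω h0]
        calc ∑ i : Fin M, (X ((i:ℝ)+1) ω - X ((i:ℝ)) ω)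
            ≤ ∑ _i : Fin M, w := Finset.sum_le_sum fun i _ => hcon' i
          _ = (M:ℝ) * w := by simp [mul_comm]
      rw [hwdef] at hsum
      rw [mul_div_cancel₀ _ (ne_of_gt hMpos)] at hsum
      exact absurd (lt_of_lt_of_le hz hsum) (lt_irrefl z)
    have h5 : P (⋃ i : Fin M, {ω | w < X ((i:ℝ)+1) ω - X ((i:ℝ)) ω})
        ≤ ∑ i : Fin M, P {ω | w < X ((i:ℝ)+1) ω - X ((i:ℝ)) ω} :=
      measure_iUnion_fintype_le _ _
    have h6 : ∀ i : Fin M, P {ω | w < X ((i:ℝ)+1) ω - X ((i:ℝ)) ω} = P {ω | w < X 1 ω} := by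
      intro i
      exact hTtail (fun ω => X ((i:ℝ)+1) ω - X ((i:ℝ)) ω) (X 1)
        ((hm _).sub (hm _)) (hm 1) (hstat (i:ℝ) 1 (by positivity) one_pos.le) w
    calc P {ω | y0 < X 1 ω} = P {ω | z < X (c^n) ω} := by rw [h1, h2]
      _ ≤ P {ω | z < X ((M:ℕ):ℝ) ω} := h3
      _ ≤ P (⋃ i : Fin M, {ω | w < X ((i:ℝ)+1) ω - X ((i:ℝ)) ω}) := h4
      _ ≤ ∑ i : Fin M, P {ω | w < X ((i:ℝ)+1) ω - X ((i:ℝ)) ω} := h5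
      _ = (M : ℝ≥0∞) * P {ω | w < X 1 ω} := by
          rw [Finset.sum_congr rfl fun i _ => h6 i]
          simp [Finset.card_univ, mul_comm]
  -- ## full tail lower bound
  have tailLB : ∀ y : ℝ, y0 ≤ y →
      ρ / (2*c*(2*y/y0)^γ) ≤ (P {ω | y < X 1 ω}).toReal := by
    intro y hy
    have hy0' : 0 < y := lt_of_lt_of_le hy00 hy
    have hquot : (1:ℝ) ≤ 2*y/y0 := by
      rw [le_div_iff₀ hy00]
      nlinarith
    obtain ⟨m, hm1, hm2⟩ := exists_nat_pow_near hquot hb1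
    set n : ℕ := m + 1 with hndef
    set M : ℕ := ⌈(c:ℝ)^n⌉₊ with hMdef
    have hcn1 : (1:ℝ) ≤ c^n := one_le_pow₀ hc.le
    have hM1 : 1 ≤ M := Nat.one_le_ceil_iff.2 (by positivity)
    have hMpos : (0:ℝ) < (M:ℝ) := by exact_mod_cast hM1
    have hM2c : (M:ℝ) ≤ 2*c^n := aux_ceil_le_two_mul _ hcn1
    have hw : y < (a^n * y0) / (M:ℝ) := by
      have hab' : a^n = c^n * b^n := by rw [hab]; ring
      have h1 : (y0/2) * b^n ≤ (a^n * y0) / (M:ℝ) := by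
        rw [le_div_iff₀ hMpos, hab']
        have hbn : (0:ℝ) < b^n := pow_pos hb0 n
        have hcn : (0:ℝ) < c^n := pow_pos hc0 n
        have h5 := mul_le_mul_of_nonneg_left hM2c (show (0:ℝ) ≤ y0/2*b^n by positivity)
        nlinarith
      have h2 : y < (y0/2) * b^n := by
        have hbn : 2*y/y0 < b^n := by
          calc 2*y/y0 < b^(m+1) := hm2
            _ = b^n := by rw [hndef]
        rw [div_lt_iff₀ hy00] at hbn
        nlinarith
      linarith
    have hsub : P {ω | (a^n * y0) / (M:ℝ) < X 1 ω} ≤ P {ω | y < X 1 ω} :=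
      measure_mono fun ω hω => lt_trans hw hω
    have hchain : P {ω | y0 < X 1 ω} ≤ (M : ℝ≥0∞) * P {ω | y < X 1 ω} :=
      le_trans (tailn n) (mul_le_mul_right hsub _)
    have htoReal : ρ ≤ (M:ℝ) * (P {ω | y < X 1 ω}).toReal := by
      have hfin : ((M : ℝ≥0∞) * P {ω | y < X 1 ω}) ≠ ⊤ :=
        ENNReal.mul_ne_top (by simp) (measure_ne_top P _)
      have := ENNReal.toReal_mono hfin hchain
      rwa [ENNReal.toReal_mul, ENNReal.toReal_natCast] at this
    have hcm : (c:ℝ)^n ≤ c * (2*y/y0)^γ := by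
      have h1 : (c:ℝ)^n = c * c^m := by rw [hndef]; ring
      have h2 : (c:ℝ)^m = ((b^m:ℝ))^γ := (hbγ m).symm
      have h3 : ((b^m:ℝ))^γ ≤ (2*y/y0)^γ :=
        Real.rpow_le_rpow (by positivity) hm1 hγ.le
      rw [h1, h2]
      nlinarith [Real.rpow_nonneg (show (0:ℝ) ≤ b^m by positivity) γ]
    have hMbound : (M:ℝ) ≤ 2*c*(2*y/y0)^γ := by
      calc (M:ℝ) ≤ 2*c^n := hM2c
        _ ≤ 2*(c*(2*y/y0)^γ) := by linarith
        _ = 2*c*(2*y/y0)^γ := by ring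
    have hT0 : 0 ≤ (P {ω | y < X 1 ω}).toReal := ENNReal.toReal_nonneg
    have hpos : (0:ℝ) < 2*c*(2*y/y0)^γ := by positivity
    rw [div_le_iff₀ hpos]
    calc ρ ≤ (M:ℝ) * (P {ω | y < X 1 ω}).toReal := htoReal
      _ ≤ (2*c*(2*y/y0)^γ) * (P {ω | y < X 1 ω}).toReal :=
          mul_le_mul_of_nonneg_right hMbound hT0
      _ = (P {ω | y < X 1 ω}).toReal * (2*c*(2*y/y0)^γ) := by ring
  -- ## complement identity
  have hcompl : ∀ y : ℝ, (P {ω | X 1 ω ≤ y}).toReal = 1 - (P {ω | y < X 1 ω}).toReal := by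
    intro y
    have hA : MeasurableSet {ω | y < X 1 ω} := measurableSet_lt measurable_const (hm 1)
    have h1 : {ω | X 1 ω ≤ y} = {ω | y < X 1 ω}ᶜ := by ext ω; simp [not_lt]
    rw [h1, prob_compl_eq_one_sub hA,
      ENNReal.toReal_sub_of_le prob_le_one ENNReal.one_ne_top]
    simp
  -- ## final constants
  set K1 : ℝ := (β/4) * (β/(4*b))^γ with hK1def
  set K2 : ℝ := ρ * (β/4)^γ with hK2def
  set K3 : ℝ := ρ / (2*c*(2/y0)^γ) with hK3def
  have hK10 : 0 < K1 := mul_pos (by positivity) (Real.rpow_pos_of_pos (by positivity) γ)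
  have hK20 : 0 < K2 := mul_pos hρ0 (Real.rpow_pos_of_pos (by positivity) γ)
  have hK30 : 0 < K3 := div_pos hρ0 (by positivity)
  refine ⟨min K1 (min K2 K3), lt_min hK10 (lt_min hK20 hK30), ?_⟩
  intro r hr x hx
  have hxg0 : 0 < x ^ (-γ) := Real.rpow_pos_of_pos hx _
  have hfin : ∀ Ki : ℝ, min K1 (min K2 K3) ≤ Ki →
      (P {ω | X 1 ω ≤ x}).toReal ≤ Real.exp (-(Ki * x ^ (-γ))) →
      P {ω | X r ω ≤ x} ≤ ENNReal.ofReal (Real.exp (-(min K1 (min K2 K3) * x ^ (-γ)))) := by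
    intro Ki hKi hP
    have hred : P {ω | X r ω ≤ x} ≤ P {ω | X 1 ω ≤ x} := by
      refine measure_mono_ae ?_
      filter_upwards [hmono] with ω hω hmem
      exact le_trans (hω 1 r zero_le_one hr.1) hmem
    calc P {ω | X r ω ≤ x} ≤ P {ω | X 1 ω ≤ x} := hred
      _ = ENNReal.ofReal ((P {ω | X 1 ω ≤ x}).toReal) :=
          (ENNReal.ofReal_toReal (measure_ne_top P _)).symm
      _ ≤ ENNReal.ofReal (Real.exp (-(min K1 (min K2 K3) * x ^ (-γ)))) := by
          refine ENNReal.ofReal_le_ofReal (le_trans hP ?_)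
          refine Real.exp_le_exp.2 (neg_le_neg ?_)
          exact mul_le_mul_of_nonneg_right hKi hxg0.le
  rcases le_or_gt x (β/4) with hcase | hcase
  · -- small x : Chernoff regime
    refine hfin K1 (min_le_left _ _) ?_
    have h4x : (1:ℝ) ≤ β/(4*x) := by
      rw [le_div_iff₀ (by positivity)]
      linarith
    obtain ⟨m, hm1, hm2⟩ := exists_nat_pow_near h4x hb1
    have hbm0 : (0:ℝ) < b^m := pow_pos hb0 m
    have hcm0 : (0:ℝ) < c^m := pow_pos hc0 m
    have e1 : a^m * x ≤ (β/4) * c^m := by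
      have hbx : b^m * x ≤ β/4 := by
        calc b^m * x ≤ (β/(4*x)) * x := mul_le_mul_of_nonneg_right hm1 hx.le
          _ = β/4 := by field_simp
      have hax : a^m = c^m * b^m := by rw [hab, mul_pow]
      calc a^m * x = c^m * (b^m * x) := by rw [hax]; ring
        _ ≤ c^m * (β/4) := mul_le_mul_of_nonneg_left hbx hcm0.le
        _ = (β/4) * c^m := by ring
    have e2 : (β/2) * c^m ≤ β * (⌊(c:ℝ)^m⌋₊:ℝ) := by
      have h := aux_half_le_floor (c^m) (one_le_pow₀ hc.le)
      nlinarith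
    have e3 : (β/(4*b))^γ * x^(-γ) ≤ c^m := by
      have hbm : β/(4*b*x) ≤ b^m := by
        rw [div_le_iff₀ (by positivity)]
        rw [pow_succ] at hm2
        rw [div_lt_iff₀ (by positivity)] at hm2
        nlinarith
      have h1 : (β/(4*b*x))^γ ≤ (b^m)^γ := Real.rpow_le_rpow (by positivity) hbm hγ.le
      rw [hbγ m] at h1
      have h2 : (β/(4*b*x))^γ = (β/(4*b))^γ * x^(-γ) := by
        rw [show β/(4*b*x) = (β/(4*b)) * x⁻¹ by field_simp,
          Real.mul_rpow (by positivity) (by positivity), Real.inv_rpow hx.le,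
          Real.rpow_neg hx.le]
      rw [← h2]
      exact h1
    calc (P {ω | X 1 ω ≤ x}).toReal
        ≤ Real.exp (a^m * x - β * (⌊(c:ℝ)^m⌋₊:ℝ)) := chernoff m x hx
      _ ≤ Real.exp (-(K1 * x^(-γ))) := by
          refine Real.exp_le_exp.2 ?_
          have hK1x : K1 * x^(-γ) ≤ (β/4) * c^m := by
            calc K1 * x^(-γ) = (β/4) * ((β/(4*b))^γ * x^(-γ)) := by rw [hK1def]; ring
              _ ≤ (β/4) * c^m := mul_le_mul_of_nonneg_left e3 (by positivity)
          linarith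
  · rcases le_or_gt x y0 with hcase2 | hcase2
    · -- middle x
      refine hfin K2 (le_trans (min_le_right _ _) (min_le_left _ _)) ?_
      have hm2' : (P {ω | X 1 ω ≤ x}).toReal ≤ (P {ω | X 1 ω ≤ y0}).toReal :=
        ENNReal.toReal_mono (measure_ne_top P _)
          (measure_mono fun ω h => le_trans h hcase2)
      rw [hcompl y0] at hm2'
      have h1ρ : 1 - ρ ≤ Real.exp (-ρ) := by
        have := Real.add_one_le_exp (-ρ)
        linarith
      have hb4 : (0:ℝ) < β/4 := by positivity
      have hK2x : K2 * x^(-γ) ≤ ρ := by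
        have h1 : (β/4)^γ ≤ x^γ := Real.rpow_le_rpow hb4.le hcase.le hγ.le
        have h2 : x^(-γ) ≤ (β/4)^(-γ) := by
          rw [Real.rpow_neg hx.le, Real.rpow_neg hb4.le]
          exact inv_anti₀ (Real.rpow_pos_of_pos hb4 γ) h1
        calc K2 * x^(-γ) ≤ K2 * (β/4)^(-γ) :=
              mul_le_mul_of_nonneg_left h2 (le_of_lt hK20)
          _ = ρ * ((β/4)^γ * (β/4)^(-γ)) := by rw [hK2def]; ring
          _ = ρ := by
              rw [← Real.rpow_add hb4]
              norm_num
      calc (P {ω | X 1 ω ≤ x}).toReal ≤ 1 - ρ := hm2'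
        _ ≤ Real.exp (-ρ) := h1ρ
        _ ≤ Real.exp (-(K2 * x^(-γ))) := Real.exp_le_exp.2 (neg_le_neg hK2x)
    · -- large x : tail regime
      refine hfin K3 (le_trans (min_le_right _ _) (min_le_right _ _)) ?_
      have hTx := tailLB x hcase2.le
      have hxγ : (0:ℝ) < x^γ := Real.rpow_pos_of_pos hx γ
      have hsplit : (2*x/y0)^γ = (2/y0)^γ * x^γ := by
        rw [show 2*x/y0 = (2/y0)*x by ring, Real.mul_rpow (by positivity) hx.le]
      have heq : K3 * x^(-γ) = ρ/(2*c*(2*x/y0)^γ) := by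
        rw [hK3def, Real.rpow_neg hx.le, hsplit]
        have hA0 : (0:ℝ) < (2/y0)^γ := Real.rpow_pos_of_pos (by positivity) γ
        field_simp [hA0.ne', hxγ.ne']
        try ring
        try exact Or.inl trivial
      rw [hcompl x]
      have hfin2 : K3 * x^(-γ) ≤ (P {ω | x < X 1 ω}).toReal := by
        rw [heq]
        exact hTx
      have hexp := Real.add_one_le_exp (-(K3 * x^(-γ)))
      calc 1 - (P {ω | x < X 1 ω}).toReal ≤ 1 - K3 * x^(-γ) := by linarith
        _ ≤ Real.exp (-(K3 * x^(-γ))) := by linarith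
end
end

section
/- Let $g:(0,\infty)\to[0,1]$ be nonincreasing with $g(1)>0$, and suppose $h=\log g$ satisfies $h(x_k)\ge k\,h(1)$ for the sequence $x_k=k^{1-1/\alpha}c^{1/\alpha}$, where $0<\alpha<1$ and $c>1$. Then there exist constants $K>0$ and $\lambda_0>0$ such that $g(\lambda)\ge\exp\big(-K\lambda^{-\alpha/(1-\alpha)}\big)$ for all $0<\lambda<\lambda_0$. -/
/-- Abstract interpolation step: if a nonincreasing `g : (0,∞) → [0,1]` with `g(1) > 0`
satisfies `log g(x_k) ≥ k log g(1)` along `x_k = k^{1-1/α} c^{1/α}`, then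
`g(λ) ≥ exp(-K λ^{-α/(1-α)})` for all small `λ > 0`. -/
theorem interpolation_step (g : ℝ → ℝ) (α c : ℝ)
    (hα0 : 0 < α) (hα1 : α < 1) (hc : 1 < c)
    (hmono : AntitoneOn g (Set.Ioi (0:ℝ)))
    (hrange : ∀ x : ℝ, 0 < x → 0 ≤ g x ∧ g x ≤ 1)
    (hg1 : 0 < g 1)
    (hsub : ∀ k : ℕ, 1 ≤ k →
      (k : ℝ) * Real.log (g 1) ≤ Real.log (g ((k : ℝ) ^ (1 - 1 / α) * c ^ (1 / α)))) :
    ∃ K lam0 : ℝ, 0 < K ∧ 0 < lam0 ∧ ∀ lam : ℝ, 0 < lam → lam < lam0 →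
      Real.exp (-(K * lam ^ (-(α / (1 - α))))) ≤ g lam := by
  have h1α : 0 < 1 - α := by linarith
  have hc0 : (0:ℝ) < c := by linarith
  set β := α / (1 - α) with hβdef
  have hβ : 0 < β := div_pos hα0 h1α
  set γ := c ^ (1 / (1 - α)) with hγdef
  have hγ0 : 0 < γ := Real.rpow_pos_of_pos hc0 _
  have hγ1 : 1 < γ := by
    rw [hγdef]
    have h := Real.rpow_lt_rpow_of_exponent_lt hc (show (0:ℝ) < 1/(1-α) by positivity)
    rwa [Real.rpow_zero] at h
  have hlog1 : Real.log (g 1) ≤ 0 := Real.log_nonpos (le_of_lt hg1) (hrange 1 one_pos).2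
  refine ⟨γ * (1 - Real.log (g 1)), (γ / (γ + 1)) ^ (1/β), ?_, ?_, ?_⟩
  · nlinarith
  · positivity
  intro lam hlam hlam0
  set e := (1 - α) / α with hedef
  have he : 0 < e := div_pos h1α hα0
  have hexp_eq : 1 - 1 / α = -e := by
    rw [hedef]; field_simp; ring
  have hlamβ : 0 < lam ^ β := Real.rpow_pos_of_pos hlam _
  have hlamnegβ : 0 < lam ^ (-β) := Real.rpow_pos_of_pos hlam _
  set N := γ * lam ^ (-β) with hNdef
  have hN0 : 0 < N := by positivity
  -- lam ^ β < γ / (γ+1)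
  have hlampow : lam ^ β < γ / (γ + 1) := by
    have h := Real.rpow_lt_rpow (le_of_lt hlam) hlam0 hβ
    rwa [← Real.rpow_mul (by positivity : (0:ℝ) ≤ γ / (γ + 1)), one_div,
      inv_mul_cancel₀ hβ.ne', Real.rpow_one] at h
  -- N > γ + 1
  have hNeq : N = γ / lam ^ β := by
    rw [hNdef, Real.rpow_neg (le_of_lt hlam)]; ring
  have hNgt : γ + 1 < N := by
    rw [hNeq]
    have h2 : γ / (γ / (γ + 1)) = γ + 1 := by
      field_simp
    calc γ + 1 = γ / (γ / (γ + 1)) := h2.symm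
      _ < γ / lam ^ β := by
          exact div_lt_div_of_pos_left hγ0 hlamβ hlampow
  set k := ⌊N⌋₊ with hkdef
  have hkleN : (k : ℝ) ≤ N := Nat.floor_le (le_of_lt hN0)
  have hkgt : N - 1 < (k : ℝ) := Nat.sub_one_lt_floor N
  have hγk : γ < (k : ℝ) := by linarith
  have hk1 : 1 ≤ k := by
    have : (1:ℝ) < (k:ℝ) := lt_trans hγ1 hγk
    exact_mod_cast le_of_lt this
  have hk0 : (0:ℝ) < (k:ℝ) := by linarith [hγ0, hγk]
  set x := (k : ℝ) ^ (1 - 1 / α) * c ^ (1 / α) with hxdef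
  have hcα : 0 < c ^ (1/α) := Real.rpow_pos_of_pos hc0 _
  have hke : 0 < (k:ℝ) ^ e := Real.rpow_pos_of_pos hk0 _
  have hxeq : x = c ^ (1/α) / (k:ℝ) ^ e := by
    rw [hxdef, hexp_eq, Real.rpow_neg (le_of_lt hk0)]; ring
  have hx0 : 0 < x := by rw [hxeq]; positivity
  -- N ^ e = c^(1/α) / lam
  have hNe : N ^ e = c ^ (1/α) / lam := by
    have h1 : 1 / (1 - α) * e = 1 / α := by
      rw [hedef]; field_simp
    have h2 : -β * e = -1 := by
      rw [hβdef, hedef]; field_simp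
    rw [hNdef, Real.mul_rpow (le_of_lt hγ0) (le_of_lt hlamnegβ), hγdef,
      ← Real.rpow_mul (le_of_lt hc0), ← Real.rpow_mul (le_of_lt hlam), h1, h2,
      Real.rpow_neg_one]
    ring
  -- k^e ≤ N^e
  have hkeNe : (k:ℝ) ^ e ≤ c ^ (1/α) / lam := by
    rw [← hNe]
    exact Real.rpow_le_rpow (le_of_lt hk0) hkleN (le_of_lt he)
  -- lam ≤ x
  have hlamx : lam ≤ x := by
    rw [hxeq, le_div_iff₀ hke]
    calc lam * (k:ℝ) ^ e ≤ lam * (c ^ (1/α) / lam) :=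
          mul_le_mul_of_nonneg_left hkeNe (le_of_lt hlam)
      _ = c ^ (1/α) := by field_simp
  -- x ≤ 1
  have hγe : γ ^ e = c ^ (1/α) := by
    rw [hγdef, ← Real.rpow_mul (le_of_lt hc0)]
    congr 1
    rw [hedef]; field_simp
  have hx1 : x ≤ 1 := by
    rw [hxeq, div_le_one hke, ← hγe]
    exact Real.rpow_le_rpow (le_of_lt hγ0) (le_of_lt hγk) (le_of_lt he)
  -- monotonicity chain
  have hgx_ge : g 1 ≤ g x := hmono (Set.mem_Ioi.2 hx0) (Set.mem_Ioi.2 one_pos) hx1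
  have hgx0 : 0 < g x := lt_of_lt_of_le hg1 hgx_ge
  have hglam : g x ≤ g lam := hmono (Set.mem_Ioi.2 hlam) (Set.mem_Ioi.2 hx0) hlamx
  have hexp_le : Real.exp ((k:ℝ) * Real.log (g 1)) ≤ g x := by
    calc Real.exp ((k:ℝ) * Real.log (g 1)) ≤ Real.exp (Real.log (g x)) :=
          Real.exp_le_exp.2 (hsub k hk1)
      _ = g x := Real.exp_log hgx0
  have hNkL : N * Real.log (g 1) ≤ (k:ℝ) * Real.log (g 1) :=
    mul_le_mul_of_nonpos_right hkleN hlog1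
  have hKN : -(γ * (1 - Real.log (g 1)) * lam ^ (-β)) ≤ N * Real.log (g 1) := by
    rw [hNdef]
    nlinarith [hlamnegβ, hγ0]
  calc Real.exp (-(γ * (1 - Real.log (g 1)) * lam ^ (-β)))
      ≤ Real.exp (N * Real.log (g 1)) := Real.exp_le_exp.2 hKN
    _ ≤ Real.exp ((k:ℝ) * Real.log (g 1)) := Real.exp_le_exp.2 hNkL
    _ ≤ g x := hexp_le
    _ ≤ g lam := hglam
end
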